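/- Each Aharonov coefficient φ_n(f; z) with n ≥ 1 is Möbius invariant: for every Möbius transformation τ(w) = (aw+b)/(cw+d), ad−bc ≠ 0, one has φ_n(τ∘f; z) = φ_n(f; z). -/

import Mathlib

open Complex Set Metric

open scoped Topology

/-- If a power series `∑ d n * y ^ n` sums to the constant `K` for every nonzero `y`
in a ball around `0`, then all coefficients with `n ≥ 1` vanish. -/
lemma aharonov_aux_const_coeffs (d : ℕ → ℂ) (K : ℂ) (r : ℝ) (hr : 0 < r)
    (h : ∀ y : ℂ, y ≠ 0 → ‖y‖ < r → HasSum (fun n : ℕ => d n * y ^ n) K) :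
    ∀ n : ℕ, 1 ≤ n → d n = 0 := by
  set p := FormalMultilinearSeries.ofScalars ℂ d with hp
  -- summability at radius r/2 gives positive radius
  have hy0 : ((r / 2 : ℝ) : ℂ) ≠ 0 := by
    simp only [ne_eq, Complex.ofReal_eq_zero]
    positivity
  have hy0r : ‖((r / 2 : ℝ) : ℂ)‖ < r := by
    rw [Complex.norm_real, Real.norm_of_nonneg (by positivity)]
    linarith
  have hsum0 : Summable fun n : ℕ => d n * ((r / 2 : ℝ) : ℂ) ^ n :=
    (h _ hy0 hy0r).summable
  have hsumnorm : Summable fun n : ℕ => ‖p n‖ * ((⟨r / 2, by positivity⟩ : NNReal) : ℝ) ^ n := by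
    have := hsum0.norm
    refine this.congr fun n => ?_
    rw [norm_mul, norm_pow, Complex.norm_real, Real.norm_of_nonneg (by positivity)]
    rw [FormalMultilinearSeries.ofScalars_norm]
  have hrad : 0 < p.radius := by
    have hle := p.le_radius_of_summable hsumnorm
    refine lt_of_lt_of_le ?_ hle
    exact ENNReal.coe_pos.mpr (NNReal.coe_pos.mp (show (0 : ℝ) < r / 2 by positivity))
  have hball := p.hasFPowerSeriesOnBall hrad
  have hat : HasFPowerSeriesAt p.sum p 0 := hball.hasFPowerSeriesAt
  -- p.sum equals K on the punctured ball
  have hK : ∀ y : ℂ, y ≠ 0 → ‖y‖ < r → p.sum y = K := by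
    intro y hy hyr
    have hhs : HasSum (fun n : ℕ => p n fun _ => y) K := by
      refine (h y hy hyr).congr_fun fun n => ?_
      rw [hp, FormalMultilinearSeries.ofScalars_apply_eq, smul_eq_mul, mul_comm]
    exact hhs.tsum_eq
  -- by continuity, p.sum 0 = K
  have hcont : ContinuousAt p.sum 0 := hat.continuousAt
  have hpsum0 : p.sum 0 = K := by
    have h1 : Filter.Tendsto p.sum (𝓝[≠] (0 : ℂ)) (𝓝 K) := by
      refine Filter.Tendsto.congr' ?_ tendsto_const_nhds
      filter_upwards [self_mem_nhdsWithin,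
        nhdsWithin_le_nhds (Metric.ball_mem_nhds (0 : ℂ) hr)] with y hy hyr
      exact (hK y hy (by simpa [dist_eq_norm] using hyr)).symm
    have h2 : Filter.Tendsto p.sum (𝓝[≠] (0 : ℂ)) (𝓝 (p.sum 0)) :=
      hcont.continuousWithinAt.tendsto
    exact tendsto_nhds_unique h2 h1
  -- p.sum agrees with the constant K near 0
  have heq : p.sum =ᶠ[𝓝 (0 : ℂ)] fun _ => K := by
    filter_upwards [Metric.ball_mem_nhds (0 : ℂ) hr] with y hy
    rcases eq_or_ne y 0 with rfl | hy0'
    · exact hpsum0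
    · exact hK y hy0' (by simpa [dist_eq_norm] using hy)
  have hconst : HasFPowerSeriesAt (fun _ : ℂ => K) p 0 := hat.congr heq
  have hps : p = constFormalMultilinearSeries ℂ ℂ K :=
    hconst.eq_formalMultilinearSeries hasFPowerSeriesAt_const
  intro n hn
  have hn0 : n ≠ 0 := by omega
  have : p n = 0 := by
    rw [hps]
    exact constFormalMultilinearSeries_apply_of_nonzero hn0
  rwa [hp, FormalMultilinearSeries.ofScalars_eq_zero] at this

/-- Möbius invariance of the Aharonov coefficients: if `τ w = (a w + b)/(c w + d)`
with `a d - b c ≠ 0`, and `φ`, `ψ` are the Aharonov coefficients at `z` of `f`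
and of `τ ∘ f` respectively, then `ψ n = φ n` for all `n ≥ 1`. -/
theorem aharonov_moebius_invariant (f : ℂ → ℂ) (z : ℂ) (r : ℝ) (hr : 0 < r)
    (a b c d : ℂ) (had : a * d - b * c ≠ 0)
    (φ ψ : ℕ → ℂ)
    (hdiff : DifferentiableOn ℂ f (ball z r))
    (hd : deriv f z ≠ 0)
    (hne : ∀ w ∈ ball z r, w ≠ z → f w ≠ f z)
    (hpole : ∀ w ∈ ball z r, c * f w + d ≠ 0)
    (hφ : ∀ w ∈ ball z r, w ≠ z →
      HasSum (fun n : ℕ => φ n * (w - z) ^ n)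
        (deriv f z / (f w - f z) - 1 / (w - z)))
    (hψ : ∀ w ∈ ball z r, w ≠ z →
      HasSum (fun n : ℕ => ψ n * (w - z) ^ n)
        (deriv (fun u => (a * f u + b) / (c * f u + d)) z /
            ((a * f w + b) / (c * f w + d) - (a * f z + b) / (c * f z + d)) -
          1 / (w - z))) :
    ∀ n : ℕ, 1 ≤ n → ψ n = φ n := by
  have hz : z ∈ ball z r := mem_ball_self hr
  have hfz : DifferentiableAt ℂ f z :=
    hdiff.differentiableAt (isOpen_ball.mem_nhds hz)
  have hczd : c * f z + d ≠ 0 := hpole z hz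
  -- compute the derivative of the composition with the Möbius map
  have hderiv : deriv (fun u => (a * f u + b) / (c * f u + d)) z
      = (a * d - b * c) * deriv f z / (c * f z + d) ^ 2 := by
    have h1 : HasDerivAt f (deriv f z) z := hfz.hasDerivAt
    have h2 : HasDerivAt (fun u => a * f u + b) (a * deriv f z) z :=
      (h1.const_mul a).add_const b
    have h3 : HasDerivAt (fun u => c * f u + d) (c * deriv f z) z :=
      (h1.const_mul c).add_const d
    have h4 := h2.fun_div h3 hczd
    rw [h4.deriv]
    field_simp
    ring
  set K := c * deriv f z / (c * f z + d) with hK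
  have key : ∀ y : ℂ, y ≠ 0 → ‖y‖ < r →
      HasSum (fun n : ℕ => (ψ n - φ n) * y ^ n) K := by
    intro y hy hyr
    set w := z + y with hw'
    have hw : w ∈ ball z r := by
      simp only [hw', mem_ball, dist_eq_norm, add_sub_cancel_left]
      exact hyr
    have hwz : w ≠ z := by
      simp only [hw', ne_eq, add_eq_left]
      exact hy
    have hwy : w - z = y := by rw [hw']; ring
    have hfw : f w - f z ≠ 0 := sub_ne_zero.mpr (hne w hw hwz)
    have hcw : c * f w + d ≠ 0 := hpole w hw
    have hs := (hψ w hw hwz).sub (hφ w hw hwz)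
    -- the difference of the two sums is exactly K
    have hD : (a * f w + b) / (c * f w + d) - (a * f z + b) / (c * f z + d)
        = (a * d - b * c) * (f w - f z) / ((c * f w + d) * (c * f z + d)) := by
      rw [div_sub_div _ _ hcw hczd]
      ring
    have hDne : (a * f w + b) / (c * f w + d) - (a * f z + b) / (c * f z + d) ≠ 0 := by
      rw [hD]
      exact div_ne_zero (mul_ne_zero had hfw) (mul_ne_zero hcw hczd)
    have harith : (deriv (fun u => (a * f u + b) / (c * f u + d)) z /
            ((a * f w + b) / (c * f w + d) - (a * f z + b) / (c * f z + d)) -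
          1 / (w - z)) - (deriv f z / (f w - f z) - 1 / (w - z)) = K := by
      rw [hderiv, hD, hK]
      field_simp
      ring
    have hs' : HasSum (fun n : ℕ => (ψ n - φ n) * (w - z) ^ n) K := by
      rw [← harith]
      exact hs.congr_fun fun n => by ring
    rwa [hwy] at hs'
  intro n hn
  have := aharonov_aux_const_coeffs (fun n => ψ n - φ n) K r hr key n hn
  exact sub_eq_zero.mp this
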